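/- Let A ∈ S_{++}^q and B ∈ S_{++}^q, and let c = d + 1 − 2ν ≥ 0 for dimension d = q and parameter ν ≤ (q+1)/2 with the convention c > 0, or more generally c ≥ 0 with c = 0 requiring ν = (q+1)/2. Then the algebraic Riccati equation c·M + M B M = A has a unique solution M ∈ S_{++}^q. -/

import Mathlib

open Matrix

section Aux

variable {n : Type*} [Fintype n] [DecidableEq n]

/-- Conjugation of a positive definite matrix by an invertible matrix is positive definite. -/
lemma aux_conjPD {A C : Matrix n n ℝ} (hA : A.PosDef) (hC : IsUnit C) :
    (Cᴴ * A * C).PosDef := by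
  refine Matrix.PosDef.of_dotProduct_mulVec_pos (Matrix.isHermitian_conjTranspose_mul_mul C hA.1) fun x hx => ?_
  have hinj : Function.Injective C.mulVec := Matrix.mulVec_injective_iff_isUnit.mpr hC
  have hCx : C *ᵥ x ≠ 0 := fun h => hx (hinj (by simpa using h))
  simpa only [star_mulVec, dotProduct_mulVec, vecMul_vecMul] using hA.dotProduct_mulVec_pos hCx

lemma aux_unitary_conjPD {D U : Matrix n n ℝ} (hD : D.PosDef)
    (hU : star U * U = 1) (hU' : U * star U = 1) : (U * D * star U).PosDef := by
  have h1 : IsUnit (star U) := ⟨⟨star U, U, hU, hU'⟩, rfl⟩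
  have := aux_conjPD hD h1
  rwa [show (star U)ᴴ = U by rw [← Matrix.star_eq_conjTranspose, star_star]] at this

/-- Key square identity. -/
lemma aux_sq_identity (c : ℝ) {N T : Matrix n n ℝ} (hNe : c • N + N * N = T) :
    (N + (c / 2) • 1) ^ 2 = T + (c ^ 2 / 4) • 1 := by
  have h : (N + (c / 2) • 1) ^ 2 = (c • N + N * N) + (c ^ 2 / 4) • (1 : Matrix n n ℝ) := by
    simp only [pow_two, add_mul, mul_add, Matrix.smul_mul, Matrix.mul_smul, Matrix.mul_one,
      Matrix.one_mul, smul_smul]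
    module
  rw [h, hNe]

lemma aux_shift_posSemidef {c : ℝ} (hc : 0 ≤ c) {N : Matrix n n ℝ} (hN : N.PosDef) :
    (N + (c / 2) • 1).PosSemidef := by
  refine (hN.add_posSemidef ?_).posSemidef
  rw [Matrix.smul_one_eq_diagonal]
  exact Matrix.PosSemidef.diagonal fun i => by positivity

/-- Uniqueness of the positive definite solution of `c • N + N² = T`. -/
lemma aux_unique (c : ℝ) (hc : 0 ≤ c) {T N₁ N₂ : Matrix n n ℝ}
    (h₁ : N₁.PosDef) (h₂ : N₂.PosDef)
    (e₁ : c • N₁ + N₁ * N₁ = T) (e₂ : c • N₂ + N₂ * N₂ = T) : N₁ = N₂ := by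
  have h : N₁ + (c / 2) • 1 = N₂ + (c / 2) • 1 := by
    open scoped MatrixOrder in
    rw [← CFC.sqrt_sq (N₁ + (c / 2) • 1) (aux_shift_posSemidef hc h₁).nonneg,
      ← CFC.sqrt_sq (N₂ + (c / 2) • 1) (aux_shift_posSemidef hc h₂).nonneg,
      aux_sq_identity c e₁, aux_sq_identity c e₂]
  exact add_right_cancel h

/-- Existence of a positive definite solution of `c • N + N² = T` for `T` positive definite. -/
lemma aux_exists (c : ℝ) (hc : 0 ≤ c) {T : Matrix n n ℝ} (hT : T.PosDef) :
    ∃ N : Matrix n n ℝ, N.PosDef ∧ c • N + N * N = T := by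
  set U : Matrix n n ℝ := (hT.1.eigenvectorUnitary : Matrix n n ℝ) with hUdef
  set μ : n → ℝ := hT.1.eigenvalues with hμdef
  have hU1 : star U * U = 1 := Unitary.coe_star_mul_self hT.1.eigenvectorUnitary
  have hU2 : U * star U = 1 := Unitary.coe_mul_star_self hT.1.eigenvectorUnitary
  have hμpos : ∀ i, 0 < μ i := hT.eigenvalues_pos
  set g : n → ℝ := fun i => (Real.sqrt (c ^ 2 + 4 * μ i) - c) / 2 with hgdef
  have hg : ∀ i, 0 < g i := by
    intro i
    have h1 : c ^ 2 < c ^ 2 + 4 * μ i := by nlinarith [hμpos i]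
    have h2 : c < Real.sqrt (c ^ 2 + 4 * μ i) := by
      calc c = Real.sqrt (c ^ 2) := by rw [Real.sqrt_sq hc]
        _ < _ := Real.sqrt_lt_sqrt (sq_nonneg c) h1
    simp only [hgdef]
    linarith
  have hgsq : ∀ i, c * g i + g i * g i = μ i := by
    intro i
    have hnn : (0:ℝ) ≤ c ^ 2 + 4 * μ i := by nlinarith [hμpos i]
    have hs : Real.sqrt (c ^ 2 + 4 * μ i) ^ 2 = c ^ 2 + 4 * μ i := Real.sq_sqrt hnn
    simp only [hgdef]
    nlinarith [hs]
  set D : Matrix n n ℝ := Matrix.diagonal g with hDdef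
  refine ⟨U * D * star U, aux_unitary_conjPD (Matrix.PosDef.diagonal hg) hU1 hU2, ?_⟩
  have hNN : (U * D * star U) * (U * D * star U) = U * (D * D) * star U := by
    simp only [Matrix.mul_assoc]
    rw [← Matrix.mul_assoc (star U) U (D * star U), hU1, Matrix.one_mul]
  have hsmul : c • (U * D * star U) = U * (c • D) * star U := by
    rw [Matrix.mul_smul, Matrix.smul_mul]
  rw [hNN, hsmul, ← Matrix.add_mul, ← Matrix.mul_add]
  have hDD : c • D + D * D = Matrix.diagonal μ := by
    rw [hDdef, Matrix.diagonal_mul_diagonal, ← Matrix.diagonal_smul, Matrix.diagonal_add]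
    exact congrArg Matrix.diagonal (funext fun i => by simpa using hgsq i)
  rw [hDD]
  have := hT.1.spectral_theorem
  rw [RCLike.ofReal_real_eq_id] at this
  simpa using this.symm

end Aux

/-- Existence and uniqueness of the positive definite solution of the
algebraic Riccati equation `c·M + M B M = A` (with `c = q + 1 − 2ν ≥ 0`),
characterizing the mode of the `MGIG_q(ν, A, B)` distribution. -/
theorem stmt_19 (q : ℕ) (A B : Matrix (Fin q) (Fin q) ℝ)
    (hA : A.PosDef) (hB : B.PosDef) (c : ℝ) (hc : 0 ≤ c) :
    ∃! M : Matrix (Fin q) (Fin q) ℝ, M.PosDef ∧ c • M + M * B * M = A := by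
  classical
  open scoped MatrixOrder in
  set S : Matrix (Fin q) (Fin q) ℝ := CFC.sqrt B with hSdef
  have hSps : S.PosSemidef := (CFC.sqrt_nonneg B).posSemidef
  have hSS : S * S = B := CFC.sqrt_mul_sqrt_self B hB.posSemidef.nonneg
  have hSh : Sᴴ = S := hSps.1
  have hSpd : S.PosDef := by
    open scoped MatrixOrder in
    exact hSps.posDef_iff_isUnit.mpr ((CFC.isUnit_sqrt_iff B hB.posSemidef.nonneg).mpr hB.isUnit)
  have hSunit : IsUnit S := hSpd.isUnit
  letI := hSunit.invertible
  have hSinv : S * S⁻¹ = 1 := Matrix.mul_inv_of_invertible S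
  have hinvS : S⁻¹ * S = 1 := Matrix.inv_mul_of_invertible S
  have hSih : (S⁻¹)ᴴ = S⁻¹ := hSps.1.inv
  have hTpd : (S * A * S).PosDef := by
    have := aux_conjPD hA hSunit
    rwa [hSh] at this
  obtain ⟨N, hNpd, hNeq⟩ := aux_exists c hc hTpd
  have hcancel : ∀ X : Matrix (Fin q) (Fin q) ℝ, S⁻¹ * (S * X * S) * S⁻¹ = X := by
    intro X
    simp only [Matrix.mul_assoc, hSinv, Matrix.mul_one]
    rw [← Matrix.mul_assoc S⁻¹ S X, hinvS, Matrix.one_mul]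
  have hcancel' : ∀ X : Matrix (Fin q) (Fin q) ℝ, S * (S⁻¹ * X * S⁻¹) * S = X := by
    intro X
    simp only [Matrix.mul_assoc, hinvS, Matrix.mul_one]
    rw [← Matrix.mul_assoc S S⁻¹ X, hSinv, Matrix.one_mul]
  have hkey : ∀ M : Matrix (Fin q) (Fin q) ℝ,
      S * (c • M + M * B * M) * S = c • (S * M * S) + (S * M * S) * (S * M * S) := by
    intro M
    have h2 : S * (M * B * M) * S = (S * M * S) * (S * M * S) := by
      rw [← hSS]
      simp only [Matrix.mul_assoc]
    rw [Matrix.mul_add, Matrix.add_mul, Matrix.mul_smul, Matrix.smul_mul, h2]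
  set M₀ : Matrix (Fin q) (Fin q) ℝ := S⁻¹ * N * S⁻¹ with hM₀def
  have hM₀pd : M₀.PosDef := by
    have := aux_conjPD hNpd hSpd.inv.isUnit
    rwa [hSih] at this
  have hΦM₀ : S * M₀ * S = N := hcancel' N
  have hM₀eq : c • M₀ + M₀ * B * M₀ = A := by
    have h1 : S * (c • M₀ + M₀ * B * M₀) * S = S * A * S := by
      rw [hkey M₀, hΦM₀, hNeq]
    have := congrArg (fun X => S⁻¹ * X * S⁻¹) h1
    simpa only [hcancel] using this
  refine ⟨M₀, ⟨hM₀pd, hM₀eq⟩, ?_⟩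
  rintro M' ⟨hM'pd, hM'eq⟩
  have hN'pd : (S * M' * S).PosDef := by
    have := aux_conjPD hM'pd hSunit
    rwa [hSh] at this
  have hN'eq : c • (S * M' * S) + (S * M' * S) * (S * M' * S) = S * A * S := by
    rw [← hkey M', hM'eq]
  have hN'N : S * M' * S = N := aux_unique c hc hN'pd hNpd hN'eq hNeq
  calc M' = S⁻¹ * (S * M' * S) * S⁻¹ := (hcancel M').symm
    _ = M₀ := by rw [hN'N]
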